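/- (Quantum monotone independence of full matrix algebras.) Let ξ : Fin n → ℂ and η : Fin m → ℂ be unit vectors, set E = Matrix.vecMulVec η (star η) ∈ Matrix (Fin m) (Fin m) ℂ and let ζ : Fin n × Fin m → ℂ, ζ(i,j) = ξ i · η j, be the product unit vector. For every k ≥ 1 and all matrices A₁, …, A_k ∈ Matrix (Fin n) (Fin n) ℂ and B₀, B₁, …, B_k ∈ Matrix (Fin m) (Fin m) ℂ, the vector state of the alternating word satisfies star ζ ⬝ᵥ ((1 ⊗ₖ B₀) * (A₁ ⊗ₖ E) * (1 ⊗ₖ B₁) * ⋯ * (A_k ⊗ₖ E) * (1 ⊗ₖ B_k)) *ᵥ ζ = (∏_{i=0}^{k} (star η ⬝ᵥ (Bᵢ *ᵥ η))) · (star ξ ⬝ᵥ ((A₁ * ⋯ * A_k) *ᵥ ξ)). Hence the ordered pair of algebras ({A ⊗ₖ E : A}, {1 ⊗ₖ B : B}) is monotone independent in the vector state given by ζ. -/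
import Mathlib


open Matrix Kronecker

private lemma dot_prod_split {n m : ℕ} (a c : Fin n → ℂ) (b d : Fin m → ℂ) :
    (star fun p : Fin n × Fin m => a p.1 * b p.2) ⬝ᵥ (fun p => c p.1 * d p.2)
      = (star a ⬝ᵥ c) * (star b ⬝ᵥ d) := by
  simp only [dotProduct, Pi.star_apply, Fintype.sum_prod_type, Finset.sum_mul_sum]
  refine Finset.sum_congr rfl fun i _ => Finset.sum_congr rfl fun j _ => ?_
  simp [star_mul']
  ring

private lemma kron_mulVec_split {n m : ℕ} (X : Matrix (Fin n) (Fin n) ℂ)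
    (Y : Matrix (Fin m) (Fin m) ℂ) (u : Fin n → ℂ) (v : Fin m → ℂ) :
    (X ⊗ₖ Y) *ᵥ (fun p : Fin n × Fin m => u p.1 * v p.2)
      = fun p => (X *ᵥ u) p.1 * (Y *ᵥ v) p.2 := by
  ext p
  simp only [mulVec, dotProduct, kroneckerMap_apply, Fintype.sum_prod_type, Finset.sum_mul_sum]
  refine Finset.sum_congr rfl fun i _ => Finset.sum_congr rfl fun j _ => ?_
  ring

private lemma vecMulVec_star_mulVec {m : ℕ} (η v : Fin m → ℂ) :
    Matrix.vecMulVec η (star η) *ᵥ v = (star η ⬝ᵥ v) • η := by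
  ext i
  simp only [vecMulVec, mulVec, dotProduct, Pi.star_apply, of_apply, Pi.smul_apply,
    smul_eq_mul, Finset.sum_mul]
  exact Finset.sum_congr rfl fun j _ => by ring

private lemma sandwich {m : ℕ} (η : Fin m → ℂ) (X Y : Matrix (Fin m) (Fin m) ℂ) :
    star η ⬝ᵥ ((X * Matrix.vecMulVec η (star η) * Y) *ᵥ η)
      = (star η ⬝ᵥ (X *ᵥ η)) * (star η ⬝ᵥ (Y *ᵥ η)) := by
  rw [mul_assoc, ← mulVec_mulVec, ← mulVec_mulVec, vecMulVec_star_mulVec,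
    mulVec_smul, dotProduct_smul, smul_eq_mul]
  ring

private lemma prod_kron {n m : ℕ} : ∀ (k : ℕ) (A : Fin k → Matrix (Fin n) (Fin n) ℂ)
    (C : Fin k → Matrix (Fin m) (Fin m) ℂ),
    (List.ofFn fun i => A i ⊗ₖ C i).prod = (List.ofFn A).prod ⊗ₖ (List.ofFn C).prod
  | 0, A, C => by simp [Matrix.one_kronecker_one]
  | (k+1), A, C => by
      simp only [List.ofFn_succ, List.prod_cons, Function.comp]
      rw [prod_kron k (fun i => A i.succ) (fun i => C i.succ), Matrix.mul_kronecker_mul]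

private lemma phi_prod {m : ℕ} (η : Fin m → ℂ) :
    ∀ (k : ℕ) (B : Fin (k + 1) → Matrix (Fin m) (Fin m) ℂ),
    star η ⬝ᵥ ((B 0 *
        (List.ofFn fun i : Fin k => Matrix.vecMulVec η (star η) * B i.succ).prod) *ᵥ η)
      = ∏ i, star η ⬝ᵥ (B i *ᵥ η)
  | 0, B => by simp
  | (k+1), B => by
      have h := phi_prod η k
        (Fin.cons (B 0 * Matrix.vecMulVec η (star η) * B 1) (fun i => B i.succ.succ))
      simp only [Fin.cons_zero, Fin.cons_succ] at h
      simp only [List.ofFn_succ, List.prod_cons, Function.comp, Fin.succ_zero_eq_one] at *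
      rw [← mul_assoc, ← mul_assoc, h, Fin.prod_univ_succ, Fin.prod_univ_succ (f := fun i => star η ⬝ᵥ (B i *ᵥ η)),
        Fin.prod_univ_succ (f := fun i : Fin (k+1) => star η ⬝ᵥ (B i.succ *ᵥ η))]
      simp only [Fin.cons_zero, Fin.cons_succ, Fin.succ_zero_eq_one]
      rw [sandwich]
      ring

/-- **Quantum monotone independence of full matrix algebras.** For unit vectors `ξ`, `η`, the
rank-one projection `E = |η⟩⟨η|` and the product unit vector `ζ = ξ ⊗ η`, the vector state of
any alternating word `(1 ⊗ₖ B₀)(A₁ ⊗ₖ E)(1 ⊗ₖ B₁) ⋯ (A_k ⊗ₖ E)(1 ⊗ₖ B_k)` factorizes as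
`(∏ᵢ ⟨η, Bᵢη⟩) · ⟨ξ, A₁⋯A_k ξ⟩`: the ordered pair of algebras `({A ⊗ₖ E}, {1 ⊗ₖ B})` is
monotone independent in the vector state given by `ζ`. -/
theorem kronecker_monotone_independence {n m : ℕ} (k : ℕ) (hk : 1 ≤ k)
    (ξ : Fin n → ℂ) (hξ : star ξ ⬝ᵥ ξ = 1)
    (η : Fin m → ℂ) (hη : star η ⬝ᵥ η = 1)
    (E : Matrix (Fin m) (Fin m) ℂ) (hE : E = Matrix.vecMulVec η (star η))
    (ζ : Fin n × Fin m → ℂ) (hζ : ζ = fun p => ξ p.1 * η p.2)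
    (A : Fin k → Matrix (Fin n) (Fin n) ℂ) (B : Fin (k + 1) → Matrix (Fin m) (Fin m) ℂ) :
    star ζ ⬝ᵥ
        ((((1 : Matrix (Fin n) (Fin n) ℂ) ⊗ₖ B 0) *
            (List.ofFn fun i : Fin k =>
              (A i ⊗ₖ E) * ((1 : Matrix (Fin n) (Fin n) ℂ) ⊗ₖ B i.succ)).prod) *ᵥ ζ)
      = (∏ i : Fin (k + 1), star η ⬝ᵥ (B i *ᵥ η)) *
          (star ξ ⬝ᵥ ((List.ofFn fun i : Fin k => A i).prod *ᵥ ξ)) := by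
  subst hζ hE
  simp only [← Matrix.mul_kronecker_mul, mul_one]
  rw [prod_kron k A (fun i => Matrix.vecMulVec η (star η) * B i.succ),
    ← Matrix.mul_kronecker_mul, one_mul, kron_mulVec_split, dot_prod_split, phi_prod]
  ring
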